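/- Let C₁, …, C_{d+1} ⊂ ℝ^d be point sets each containing the origin in its convex hull. Then there exists a colorful choice C = {c₁, …, c_{d+1}} with c_i ∈ C_i for each i such that the origin lies in conv(C). -/

import Mathlib

open Metric Set Module
open scoped RealInnerProductSpace

variable {F : Type*} [NormedAddCommGroup F] [InnerProductSpace ℝ F]

lemma exists_segment_norm_lt {x y : F} (hx : x ≠ 0) (hy : ⟪x, y⟫ ≤ 0) :
    ∃ z ∈ segment ℝ x y, ‖z‖ < ‖x‖ := by
  have hxx : ⟪x, x⟫ = ‖x‖ ^ 2 := real_inner_self_eq_norm_sq x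
  have hx2 : 0 < ‖x‖ ^ 2 := by
    have := norm_pos_iff.mpr hx; positivity
  set D : ℝ := ‖y - x‖ ^ 2 with hD
  have hDnn : 0 ≤ D := by positivity
  set ε : ℝ := min 1 (‖x‖ ^ 2 / (D + 1)) with hε
  have hε0 : 0 < ε := lt_min one_pos (by positivity)
  have hε1 : ε ≤ 1 := min_le_left _ _
  have hεD : ε * (D + 1) ≤ ‖x‖ ^ 2 := by
    calc ε * (D + 1) ≤ (‖x‖ ^ 2 / (D + 1)) * (D + 1) := by
          apply mul_le_mul_of_nonneg_right (min_le_right _ _) (by positivity)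
      _ = ‖x‖ ^ 2 := by field_simp
  refine ⟨(1 - ε) • x + ε • y, ⟨1 - ε, ε, by linarith, le_of_lt hε0, by ring, rfl⟩, ?_⟩
  have key : ‖(1 - ε) • x + ε • y‖ ^ 2 < ‖x‖ ^ 2 := by
    have hexp : (1 - ε) • x + ε • y = x + ε • (y - x) := by
      rw [smul_sub]; module
    rw [hexp, norm_add_sq_real, real_inner_smul_right, norm_smul, mul_pow]
    have hinner : ⟪x, y - x⟫ = ⟪x, y⟫ - ‖x‖ ^ 2 := by
      rw [inner_sub_right, hxx]
    have hab : ‖(ε : ℝ)‖ ^ 2 = ε ^ 2 := by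
      rw [Real.norm_eq_abs, sq_abs]
    rw [hab, hinner]
    nlinarith [sq_nonneg ε, hε0, hε1, hεD, hx2, hy, hDnn]
  exact lt_of_pow_lt_pow_left₀ 2 (norm_nonneg x) key

lemma inner_ge_of_norm_min {K : Set F} (hK : Convex ℝ K) {x : F} (hxK : x ∈ K)
    (hmin : ∀ w ∈ K, ‖x‖ ≤ ‖w‖) : ∀ w ∈ K, ‖x‖ ^ 2 ≤ ⟪x, w⟫ := by
  have hiInf : ‖(0 : F) - x‖ = ⨅ w : K, ‖(0 : F) - w‖ := by
    have hne : Nonempty K := ⟨⟨x, hxK⟩⟩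
    apply le_antisymm
    · exact le_ciInf fun w => by
        simpa [norm_neg, zero_sub] using hmin w w.2
    · exact ciInf_le ⟨0, fun r ⟨w, hw⟩ => hw ▸ norm_nonneg _⟩ (⟨x, hxK⟩ : K)
  have h := (norm_eq_iInf_iff_real_inner_le_zero hK hxK).mp hiInf
  intro w hw
  have h2 := h w hw
  have hexp : ⟪(0 : F) - x, w - x⟫ = -⟪x, w⟫ + ‖x‖ ^ 2 := by
    rw [zero_sub, inner_sub_right, inner_neg_left, inner_neg_left,
      real_inner_self_eq_norm_sq]
    ring
  linarith [hexp ▸ h2]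

theorem colorful_caratheodory_aux {E : Type*} [NormedAddCommGroup E] [InnerProductSpace ℝ E]
    [FiniteDimensional ℝ E] (d : ℕ) (hd : finrank ℝ E = d)
    (C : Fin (d + 1) → Set E) (h : ∀ i, (0 : E) ∈ convexHull ℝ (C i)) :
    ∃ c : Fin (d + 1) → E, (∀ i, c i ∈ C i) ∧ (0 : E) ∈ convexHull ℝ (Set.range c) := by
  classical
  -- reduce each color class to a finite subset
  have key : ∀ i, ∃ t : Finset E, ↑t ⊆ C i ∧ (0 : E) ∈ convexHull ℝ (↑t : Set E) := by
    intro i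
    have hi := h i
    rw [convexHull_eq_union_convexHull_finite_subsets] at hi
    simpa using hi
  choose T hTsub hT0 using key
  have hTne : ∀ i, (T i).Nonempty := by
    intro i
    have : (↑(T i) : Set E).Nonempty := convexHull_nonempty_iff.mp ⟨0, hT0 i⟩
    exact this
  -- the finite type of colorful choices
  let P := ∀ i : Fin (d + 1), {y // y ∈ T i}
  have : Nonempty P := ⟨fun i => ⟨(hTne i).choose, (hTne i).choose_spec⟩⟩
  let F : P → ℝ := fun p => infDist 0 (convexHull ℝ (Set.range fun i => (p i : E)))
  obtain ⟨p, hp⟩ := Finite.exists_min F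
  set c : Fin (d + 1) → E := fun i => (p i : E) with hc
  set K : Set E := convexHull ℝ (Set.range c) with hKdef
  have hKcv : Convex ℝ K := convex_convexHull ℝ _
  have hKne : K.Nonempty := convexHull_nonempty_iff.mpr (range_nonempty _)
  have hKcpt : IsCompact K := (finite_range c).isCompact_convexHull ℝ
  suffices h0 : (0 : E) ∈ K by
    exact ⟨c, fun i => hTsub i (p i).2, h0⟩
  by_contra h0
  have hδpos : 0 < infDist 0 K :=
    (hKcpt.isClosed.notMem_iff_infDist_pos hKne).mp h0
  obtain ⟨x, hxK, hxd⟩ := hKcpt.exists_infDist_eq_dist hKne 0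
  have hxn : ‖x‖ = infDist 0 K := by rw [hxd, dist_zero_left]
  have hxne : x ≠ 0 := fun hx0 => by
    rw [hx0, norm_zero] at hxn; exact absurd hxn.symm (ne_of_gt hδpos)
  have hmin : ∀ w ∈ K, ‖x‖ ≤ ‖w‖ := fun w hw => by
    rw [hxn]
    simpa [dist_zero_left] using infDist_le_dist_of_mem (x := (0:E)) hw
  have hvar : ∀ w ∈ K, ‖x‖ ^ 2 ≤ ⟪x, w⟫ := inner_ge_of_norm_min hKcv hxK hmin
  -- x lies in the convex hull of the touching points
  set s : Finset E := Finset.image c Finset.univ with hs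
  have hsc : (↑s : Set E) = Set.range c := by
    simp [hs]
  have hxs : x ∈ convexHull ℝ (↑s : Set E) := by rw [hsc]; exact hxK
  rw [Finset.convexHull_eq] at hxs
  obtain ⟨w, hw0, hw1, hwx⟩ := hxs
  rw [Finset.centerMass_eq_of_sum_1 _ _ hw1] at hwx
  simp only [id] at hwx
  -- every point of s satisfies ⟪x,y⟫ ≥ ‖x‖², with equality where w > 0
  have hge : ∀ y ∈ s, ‖x‖ ^ 2 ≤ ⟪x, y⟫ := by
    intro y hy
    apply hvar
    apply subset_convexHull ℝ (Set.range c)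
    rw [← hsc]
    exact_mod_cast hy
  have hsum0 : ∑ y ∈ s, w y * (⟪x, y⟫ - ‖x‖ ^ 2) = 0 := by
    have hxx : ⟪x, x⟫ = ‖x‖ ^ 2 := real_inner_self_eq_norm_sq x
    have hinner : ⟪x, x⟫ = ∑ y ∈ s, w y * ⟪x, y⟫ := by
      rw [← hwx, inner_sum]
      simp [real_inner_smul_right]
    have : ∑ y ∈ s, w y * (⟪x, y⟫ - ‖x‖ ^ 2)
        = (∑ y ∈ s, w y * ⟪x, y⟫) - (∑ y ∈ s, w y) * ‖x‖ ^ 2 := by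
      rw [Finset.sum_mul, ← Finset.sum_sub_distrib]
      congr 1; ext y; ring
    rw [this, ← hinner, hw1, hxx]; ring
  have heach : ∀ y ∈ s, w y * (⟪x, y⟫ - ‖x‖ ^ 2) = 0 := by
    intro y hy
    have := (Finset.sum_eq_zero_iff_of_nonneg (fun y hy =>
      mul_nonneg (hw0 y hy) (by linarith [hge y hy]))).mp hsum0
    exact this y hy
  -- the touching face
  set s' : Finset E := s.filter (fun y => ⟪x, y⟫ = ‖x‖ ^ 2) with hs'
  have hw_out : ∀ y ∈ s, y ∉ s' → w y = 0 := by
    intro y hy hy'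
    rcases mul_eq_zero.mp (heach y hy) with h1 | h2
    · exact h1
    · exact absurd (Finset.mem_filter.mpr ⟨hy, by linarith⟩) hy'
  have hxs' : x ∈ convexHull ℝ (↑s' : Set E) := by
    have hsub : s' ⊆ s := Finset.filter_subset _ _
    have hsum' : ∑ y ∈ s', w y = 1 := by
      rw [← hw1]
      exact Finset.sum_subset hsub (fun y hy hy' => hw_out y hy hy')
    have hx' : ∑ y ∈ s', w y • y = x := by
      rw [← hwx]
      exact Finset.sum_subset hsub (fun y hy hy' => by rw [hw_out y hy hy', zero_smul])
    rw [← hx', ← Finset.centerMass_eq_of_sum_1 _ _ hsum']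
    exact s'.centerMass_mem_convexHull (fun y hy => hw0 y (hsub hy))
      (by rw [hsum']; norm_num) (fun y hy => Finset.mem_coe.mpr hy)
  -- Carathéodory: an affinely independent touching subset
  rw [convexHull_eq_union] at hxs'
  simp only [Set.mem_iUnion, exists_prop] at hxs'
  obtain ⟨t, hts', htind, hxt⟩ := hxs'
  -- the touching subset has at most d points
  have htcard : t.card ≤ d := by
    by_contra hcard
    push_neg at hcard
    have hle : t.card ≤ d + 1 := by
      have h1 := htind.card_le_finrank_succ
      rw [Fintype.card_coe] at h1
      have h2 : finrank ℝ (vectorSpan ℝ (Set.range ((↑) : t → E))) ≤ finrank ℝ E :=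
        Submodule.finrank_le _
      omega
    have hcard' : t.card = d + 1 := le_antisymm hle hcard
    have htop : affineSpan ℝ (Set.range ((↑) : t → E)) = ⊤ := by
      rw [htind.affineSpan_eq_top_iff_card_eq_finrank_add_one]
      simp [Fintype.card_coe, hcard', hd]
    have h0span : (0 : E) ∈ affineSpan ℝ (Set.range ((↑) : t → E)) := by
      rw [htop]; trivial
    obtain ⟨u, wt, hwt1, hwt0⟩ := eq_affineCombination_of_mem_affineSpan h0span
    have h0eq : (0 : E) = ∑ i ∈ u, wt i • (i : E) := by
      rw [hwt0, Finset.affineCombination_eq_linear_combination _ _ _ hwt1]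
    have hinner0 : (0 : ℝ) = ‖x‖ ^ 2 := by
      have : ⟪x, (0 : E)⟫ = ∑ i ∈ u, wt i * ⟪x, (i : E)⟫ := by
        rw [h0eq, inner_sum]
        simp [real_inner_smul_right]
      rw [inner_zero_right] at this
      have hall : ∀ i ∈ u, wt i * ⟪x, (i : E)⟫ = wt i * ‖x‖ ^ 2 := by
        intro i _
        have hi : (i : E) ∈ s' := hts' i.2
        rw [(Finset.mem_filter.mp hi).2]
      rw [Finset.sum_congr rfl hall, ← Finset.sum_mul, hwt1, one_mul] at this
      exact this
    have : 0 < ‖x‖ ^ 2 := by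
      have := norm_pos_iff.mpr hxne; positivity
    linarith
  -- pick an unused color
  have hexg : ∀ y ∈ t, ∃ i, c i = y := by
    intro y hy
    have : y ∈ Set.range c := by
      rw [← hsc]
      exact Finset.coe_subset.mpr ((hts'.trans (Finset.filter_subset _ _))) hy
    exact this
  choose g hg using hexg
  set used : Finset (Fin (d + 1)) := t.attach.image (fun y => g y.1 y.2) with hused
  have husedcard : used.card ≤ d := le_trans (Finset.card_image_le.trans (by simp)) htcard
  obtain ⟨j, hj⟩ : ∃ j, j ∉ used := by
    by_contra hall
    push_neg at hall
    have heq : used = Finset.univ := Finset.eq_univ_iff_forall.mpr hall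
    rw [heq, Finset.card_univ, Fintype.card_fin] at husedcard
    omega
  -- find a point of color j on the other side
  have hyex : ∃ y ∈ T j, ⟪x, y⟫ ≤ 0 := by
    by_contra hally
    push_neg at hally
    set m : ℝ := (T j).inf' (hTne j) (fun y => ⟪x, y⟫) with hm
    have hmpos : 0 < m := by
      rw [hm, Finset.lt_inf'_iff]
      exact fun y hy => hally y hy
    have hcvA : Convex ℝ {y : E | m ≤ ⟪x, y⟫} :=
      convex_halfSpace_ge ⟨fun a b => inner_add_right _ _ _, fun r a => real_inner_smul_right _ _ _⟩ m
    have hsubA : convexHull ℝ (↑(T j) : Set E) ⊆ {y : E | m ≤ ⟪x, y⟫} := by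
      apply convexHull_min ?_ hcvA
      intro y hy
      show m ≤ ⟪x, y⟫
      exact Finset.inf'_le _ (by exact_mod_cast hy)
    have := hsubA (hT0 j)
    simp only [Set.mem_setOf_eq, inner_zero_right] at this
    linarith
  obtain ⟨y0, hy0T, hy0⟩ := hyex
  -- the swap
  set q : P := Function.update p j ⟨y0, hy0T⟩ with hq
  set c' : Fin (d + 1) → E := fun i => (q i : E) with hc'
  have hKq : convexHull ℝ (Set.range c') = convexHull ℝ (Set.range fun i => (q i : E)) := rfl
  have htsub' : (↑t : Set E) ⊆ Set.range c' := by
    intro y hy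
    have hy' : y ∈ t := hy
    refine ⟨g y hy', ?_⟩
    have hgj : g y hy' ≠ j := by
      intro heq
      exact hj (heq ▸ Finset.mem_image.mpr ⟨⟨y, hy'⟩, Finset.mem_attach _ _, rfl⟩)
    simp only [hc', hq, Function.update_of_ne hgj]
    exact hg y hy'
  have hxK' : x ∈ convexHull ℝ (Set.range c') :=
    convexHull_mono htsub' hxt
  have hy0K' : y0 ∈ convexHull ℝ (Set.range c') := by
    apply subset_convexHull
    exact ⟨j, by simp [hc', hq, Function.update_self]⟩
  obtain ⟨z, hzseg, hzn⟩ := exists_segment_norm_lt hxne hy0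
  have hzK' : z ∈ convexHull ℝ (Set.range c') :=
    (convex_convexHull ℝ _).segment_subset hxK' hy0K' hzseg
  have hFq : F q ≤ ‖z‖ := by
    have := infDist_le_dist_of_mem (x := (0 : E)) hzK'
    simpa [F, dist_zero_left] using this
  have hFp : F p = ‖x‖ := hxn.symm
  have := hp q
  rw [hFp] at this
  linarith

/-- The colorful Carathéodory theorem (convex version, Bárány): if each of `d+1`
color classes `C₁, …, C_{d+1} ⊂ ℝ^d` contains the origin in its convex hull, then
there is a colorful choice containing the origin in its convex hull. -/
theorem colorful_caratheodory (d : ℕ) (C : Fin (d + 1) → Set (Fin d → ℝ))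
    (h : ∀ i, (0 : Fin d → ℝ) ∈ convexHull ℝ (C i)) :
    ∃ c : Fin (d + 1) → Fin d → ℝ, (∀ i, c i ∈ C i) ∧
      (0 : Fin d → ℝ) ∈ convexHull ℝ (Set.range c) := by
  set L : EuclideanSpace ℝ (Fin d) ≃L[ℝ] (Fin d → ℝ) := EuclideanSpace.equiv (Fin d) ℝ with hL
  have hfr : finrank ℝ (EuclideanSpace ℝ (Fin d)) = d := finrank_euclideanSpace_fin
  set D : Fin (d + 1) → Set (EuclideanSpace ℝ (Fin d)) := fun i => L.symm '' C i with hD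
  have himg : ∀ s : Set (Fin d → ℝ), L.symm '' (convexHull ℝ s) = convexHull ℝ (L.symm '' s) := by
    intro s
    have h1 := (L.symm.toLinearEquiv.toLinearMap).image_convexHull s
    have h2 : ⇑(L.symm.toLinearEquiv.toLinearMap) = ⇑L.symm := rfl
    rw [h2] at h1
    exact h1
  have himg' : ∀ s : Set (EuclideanSpace ℝ (Fin d)), L '' (convexHull ℝ s) = convexHull ℝ (L '' s) := by
    intro s
    have h1 := (L.toLinearEquiv.toLinearMap).image_convexHull s
    have h2 : ⇑(L.toLinearEquiv.toLinearMap) = ⇑L := rfl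
    rw [h2] at h1
    exact h1
  have hD0 : ∀ i, (0 : EuclideanSpace ℝ (Fin d)) ∈ convexHull ℝ (D i) := by
    intro i
    have h3 : L.symm 0 ∈ L.symm '' (convexHull ℝ (C i)) := Set.mem_image_of_mem _ (h i)
    rw [himg] at h3
    simpa using h3
  obtain ⟨c, hcmem, hc0⟩ := colorful_caratheodory_aux d hfr D hD0
  refine ⟨fun i => L (c i), ?_, ?_⟩
  · intro i
    obtain ⟨y, hy, hyc⟩ := hcmem i
    have h4 : L (L.symm y) ∈ C i := by simpa using hy
    rwa [hyc] at h4
  · have h5 : L 0 ∈ L '' (convexHull ℝ (Set.range c)) := Set.mem_image_of_mem _ hc0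
    rw [himg'] at h5
    simp only [map_zero] at h5
    convert h5 using 2
    rw [← Set.range_comp]
    rfl
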